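/- arXiv:2009.02955 — 2 statements merged into one kernel-verified Lean document; each statement's English description precedes it below -/
import Mathlib

section
/- Assume the eigenvalues are strictly ordered t_1 > t_2 > ⋯ > t_n. Let μ ∈ ℝ and 1 ≤ i < m with t_i ≠ μ. Then the first-order truncation error satisfies ‖Σ_{k=m+1}^{n} (⟨E v_i, v_k⟩/(t_i − t_k)) v_k − (1/(t_i − μ)) r_i‖ ≤ (Σ_{k=m+1}^{n} |t_k − μ|) · ‖E‖₂ / (|t_i − t_m| · |t_i − μ|). -/
open Matrix Finset

/-- Error bound for the first-order truncated perturbation formula: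
`‖∑_{k=m+1}^n (⟨E v_i, v_k⟩/(t_i − t_k)) v_k − (1/(t_i − μ)) r_i‖ ≤
 (∑_{k=m+1}^n |t_k − μ|) ‖E‖₂ / (|t_i − t_m| |t_i − μ|)`. -/
theorem first_order_truncation_error_bound {n m : ℕ} (hm1 : 1 ≤ m) (hmn : m ≤ n)
    (A' E : Matrix (Fin n) (Fin n) ℝ) (hA' : A'.IsSymm) (hE : E.IsSymm)
    (t : Fin n → ℝ) (v : Fin n → Fin n → ℝ)
    (hortho : ∀ k l : Fin n, v k ⬝ᵥ v l = if k = l then 1 else 0)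
    (heig : ∀ k : Fin n, A'.mulVec (v k) = t k • v k)
    (hord : ∀ k l : Fin n, k < l → t l < t k)
    (V : Matrix (Fin n) (Fin m) ℝ)
    (hV : ∀ (p : Fin n) (j : Fin m), V p j = v (Fin.castLE hmn j) p)
    (i : Fin n) (hi : (i : ℕ) + 1 < m)
    (r : Fin n → ℝ)
    (hr : r = ((1 : Matrix (Fin n) (Fin n) ℝ) - V * Vᵀ).mulVec (E.mulVec (v i)))
    (μ : ℝ) (hμ : t i ≠ μ) :
    ‖(WithLp.equiv 2 (Fin n → ℝ)).symm
        ((∑ k ∈ Finset.univ.filter (fun k : Fin n => m ≤ (k : ℕ)),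
            ((E.mulVec (v i) ⬝ᵥ v k) / (t i - t k)) • v k)
          - (1 / (t i - μ)) • r)‖ ≤
      (∑ k ∈ Finset.univ.filter (fun k : Fin n => m ≤ (k : ℕ)), |t k - μ|)
        * ‖Matrix.toEuclideanCLM (𝕜 := ℝ) E‖
        / (|t i - t ⟨m - 1, by omega⟩| * |t i - μ|) := by
  classical
  set S : Finset (Fin n) := Finset.univ.filter (fun k : Fin n => m ≤ (k : ℕ)) with hS
  set T : Finset (Fin n) := Finset.univ.filter (fun k : Fin n => (k : ℕ) < m) with hT
  set km : Fin n := ⟨m - 1, by omega⟩ with hkm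
  set N : ℝ := ‖Matrix.toEuclideanCLM (𝕜 := ℝ) E‖ with hN
  set a : ℝ := |t i - t km| with ha
  set b : ℝ := |t i - μ| with hb
  set c : Fin n → ℝ := fun k => E.mulVec (v i) ⬝ᵥ v k with hc
  -- completeness of the basis
  have hP : ∀ x : Fin n → ℝ, (∑ k : Fin n, (x ⬝ᵥ v k) • v k) = x := by
    intro x
    set P : Matrix (Fin n) (Fin n) ℝ := Matrix.of (fun k p => v k p) with hPdef
    have h1 : P * Pᵀ = 1 := by
      ext k l
      simp [hPdef, Matrix.mul_apply, Matrix.one_apply, ← hortho k l, dotProduct]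
    have h2 : Pᵀ * P = 1 := mul_eq_one_comm.mp h1
    funext p
    have := congrArg (fun M => (Matrix.mulVec M x) p) h2
    simp only [Matrix.one_mulVec] at this
    rw [← this]
    simp only [Matrix.mulVec, Matrix.mul_apply, dotProduct, hPdef, Matrix.of_apply,
      Matrix.transpose_apply, Finset.sum_apply, Pi.smul_apply, smul_eq_mul,
      Finset.sum_mul, Finset.mul_sum]
    rw [Finset.sum_comm]
    congr 1; funext k; congr 1; funext q; ring
  -- r as a tail sum
  have hVV : ∀ x : Fin n → ℝ, (V * Vᵀ).mulVec x = ∑ j : Fin m,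
      (x ⬝ᵥ v (Fin.castLE hmn j)) • v (Fin.castLE hmn j) := by
    intro x
    funext p
    simp only [Matrix.mulVec, Matrix.mul_apply, dotProduct, hV, Matrix.transpose_apply,
      Finset.sum_apply, Pi.smul_apply, smul_eq_mul, Finset.sum_mul, Finset.mul_sum]
    rw [Finset.sum_comm]
    congr 1; funext j; congr 1; funext q; ring
  have himg : (Finset.univ.image (Fin.castLE hmn) : Finset (Fin n)) = T := by
    ext k
    simp only [Finset.mem_image, Finset.mem_univ, true_and, hT, Finset.mem_filter]
    constructor
    · rintro ⟨j, rfl⟩; exact j.isLt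
    · intro hk; exact ⟨⟨k, hk⟩, rfl⟩
  have hsumT : ∀ g : Fin n → (Fin n → ℝ), ∑ j : Fin m, g (Fin.castLE hmn j) = ∑ k ∈ T, g k := by
    intro g
    rw [← himg, Finset.sum_image]
    intro p _ q _ h
    exact Fin.castLE_injective hmn h
  have hTsum : ∑ j : Fin m, (E.mulVec (v i) ⬝ᵥ v (Fin.castLE hmn j)) • v (Fin.castLE hmn j)
      = ∑ k ∈ T, (E.mulVec (v i) ⬝ᵥ v k) • v k := hsumT (fun k => (E.mulVec (v i) ⬝ᵥ v k) • v k)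
  have hdisj : Disjoint T S := by
    rw [Finset.disjoint_left]; intro k hk hk'
    simp [hT, hS] at hk hk'; omega
  have hunion : T ∪ S = Finset.univ := by
    ext k; simp [hT, hS]; omega
  have hrS : r = ∑ k ∈ S, c k • v k := by
    rw [hr, Matrix.sub_mulVec, Matrix.one_mulVec, hVV, hTsum]
    have hx := hP (E.mulVec (v i))
    rw [← hunion, Finset.sum_union hdisj] at hx
    simp only [hc]
    exact sub_eq_of_eq_add' hx.symm
  -- the vector as a single sum
  set d : Fin n → ℝ := fun k => c k / (t i - t k) - c k / (t i - μ) with hd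
  have hgoal : (∑ k ∈ S, ((E.mulVec (v i) ⬝ᵥ v k) / (t i - t k)) • v k)
      - (1 / (t i - μ)) • r = ∑ k ∈ S, d k • v k := by
    rw [hrS, Finset.smul_sum, ← Finset.sum_sub_distrib]
    refine Finset.sum_congr rfl fun k _ => ?_
    rw [smul_smul, ← sub_smul]
    congr 1
    simp only [hd, hc]
    ring
  -- norms of basis vectors
  have hnv : ∀ k : Fin n, ‖(WithLp.equiv 2 (Fin n → ℝ)).symm (v k)‖ = 1 := by
    intro k
    rw [EuclideanSpace.norm_eq]
    have h0 := hortho k k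
    rw [if_pos rfl] at h0
    simp only [dotProduct] at h0
    have h1 : ∑ q, ‖(WithLp.equiv 2 (Fin n → ℝ)).symm (v k) q‖ ^ 2 = 1 := by
      rw [← h0]
      refine Finset.sum_congr rfl fun q _ => ?_
      show ‖v k q‖ ^ 2 = v k q * v k q
      rw [Real.norm_eq_abs, sq_abs, sq]
    rw [h1, Real.sqrt_one]
  -- bound on coefficients
  have hcN : ∀ k : Fin n, |c k| ≤ N := by
    intro k
    have hinner : c k = inner (𝕜 := ℝ) ((Matrix.toEuclideanCLM (𝕜 := ℝ) E)
        ((WithLp.equiv 2 (Fin n → ℝ)).symm (v i))) ((WithLp.equiv 2 (Fin n → ℝ)).symm (v k)) := by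
      rw [WithLp.equiv_symm_apply, Matrix.toEuclideanCLM_toLp, PiLp.inner_apply]
      simp [hc, dotProduct, RCLike.inner_apply, Matrix.toLin'_apply, Matrix.mulVec, mul_comm]
    rw [hinner]
    calc |inner (𝕜 := ℝ) ((Matrix.toEuclideanCLM (𝕜 := ℝ) E)
          ((WithLp.equiv 2 (Fin n → ℝ)).symm (v i))) ((WithLp.equiv 2 (Fin n → ℝ)).symm (v k))|
        ≤ ‖(Matrix.toEuclideanCLM (𝕜 := ℝ) E) ((WithLp.equiv 2 (Fin n → ℝ)).symm (v i))‖ *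
          ‖(WithLp.equiv 2 (Fin n → ℝ)).symm (v k)‖ := abs_real_inner_le_norm _ _
      _ ≤ N * 1 * 1 := by
          rw [hnv]
          gcongr
          calc ‖(Matrix.toEuclideanCLM (𝕜 := ℝ) E) ((WithLp.equiv 2 (Fin n → ℝ)).symm (v i))‖
              ≤ N * ‖(WithLp.equiv 2 (Fin n → ℝ)).symm (v i)‖ :=
                (Matrix.toEuclideanCLM (𝕜 := ℝ) E).le_opNorm _
            _ = N * 1 := by rw [hnv]
      _ = N := by ring
  have hN0 : 0 ≤ N := norm_nonneg _
  -- eigenvalue inequalities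
  have hikm : t km < t i := by
    apply hord
    rw [Fin.lt_def]; simp only [hkm]; omega
  have ha0 : 0 < a := by rw [ha, abs_pos]; intro h; linarith [sub_eq_zero.mp h]
  have hb0 : 0 < b := by rw [hb, abs_pos]; intro h; exact hμ (sub_eq_zero.mp h)
  have htk : ∀ k ∈ S, a ≤ |t i - t k| := by
    intro k hk
    simp only [hS, Finset.mem_filter] at hk
    have hkmk : t k < t km := by
      apply hord
      rw [Fin.lt_def]; simp only [hkm]; omega
    rw [ha, abs_of_pos (by linarith), abs_of_pos (by linarith)]
    linarith
  -- per-term bound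
  have hterm : ∀ k ∈ S, ‖(WithLp.equiv 2 (Fin n → ℝ)).symm (d k • v k)‖
      ≤ |t k - μ| * N / (a * b) := by
    intro k hk
    have hnorm : ‖(WithLp.equiv 2 (Fin n → ℝ)).symm (d k • v k)‖ = |d k| := by
      have h2 : (WithLp.equiv 2 (Fin n → ℝ)).symm (d k • v k)
          = d k • (WithLp.equiv 2 (Fin n → ℝ)).symm (v k) := rfl
      rw [h2, norm_smul, hnv, Real.norm_eq_abs, mul_one]
    rw [hnorm]
    have htik : t i - t k ≠ 0 := by
      have := htk k hk; intro h; rw [h, abs_zero] at this; linarith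
    have htiμ : t i - μ ≠ 0 := sub_ne_zero.mpr hμ
    have hdk : d k = c k * (t k - μ) / ((t i - t k) * (t i - μ)) := by
      simp only [hd]; field_simp; ring
    rw [hdk, abs_div, abs_mul, abs_mul, ← hb]
    apply div_le_div₀ (by positivity) _ (by positivity) _
    · calc |c k| * |t k - μ| ≤ N * |t k - μ| := by gcongr; exact hcN k
        _ = |t k - μ| * N := by ring
    · gcongr; exact htk k hk
  -- conclude
  rw [hgoal]
  calc ‖(WithLp.equiv 2 (Fin n → ℝ)).symm (∑ k ∈ S, d k • v k)‖
      = ‖∑ k ∈ S, (WithLp.equiv 2 (Fin n → ℝ)).symm (d k • v k)‖ := by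
        congr 1; rw [WithLp.equiv_symm_apply]; exact WithLp.toLp_sum _ _ _ _
    _ ≤ ∑ k ∈ S, ‖(WithLp.equiv 2 (Fin n → ℝ)).symm (d k • v k)‖ := norm_sum_le _ _
    _ ≤ ∑ k ∈ S, |t k - μ| * N / (a * b) := Finset.sum_le_sum hterm
    _ = (∑ k ∈ S, |t k - μ|) * N / (a * b) := by
        rw [Finset.sum_mul, Finset.sum_div]
end

section
/- Let μ ∈ ℝ and 1 ≤ i ≤ m, and assume t_i ≠ μ and t_i ≠ t_k for all m+1 ≤ k ≤ n. Then the second-order truncation error vector satisfies the exact identity Σ_{k=m+1}^{n} (⟨E v_i, v_k⟩/(t_i − t_k)) v_k − [ (1/(t_i − μ)) r_i − (μ/(t_i − μ)²) r_i + (1/(t_i − μ)²) A' r_i ] = Σ_{k=m+1}^{n} ((t_k − μ)²/((t_i − t_k)(t_i − μ)²)) ⟨E v_i, v_k⟩ v_k. -/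
open Matrix Finset

/-- Exact identity for the second-order truncation error vector. -/
theorem second_order_truncation_error_identity {n m : ℕ} (hm1 : 1 ≤ m) (hmn : m ≤ n)
    (A' E : Matrix (Fin n) (Fin n) ℝ) (hA' : A'.IsSymm) (hE : E.IsSymm)
    (t : Fin n → ℝ) (v : Fin n → Fin n → ℝ)
    (hortho : ∀ k l : Fin n, v k ⬝ᵥ v l = if k = l then 1 else 0)
    (heig : ∀ k : Fin n, A'.mulVec (v k) = t k • v k)
    (V : Matrix (Fin n) (Fin m) ℝ)
    (hV : ∀ (p : Fin n) (j : Fin m), V p j = v (Fin.castLE hmn j) p)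
    (i : Fin n) (hi : (i : ℕ) < m)
    (r : Fin n → ℝ)
    (hr : r = ((1 : Matrix (Fin n) (Fin n) ℝ) - V * Vᵀ).mulVec (E.mulVec (v i)))
    (μ : ℝ) (hμ : t i ≠ μ)
    (htk : ∀ k : Fin n, m ≤ (k : ℕ) → t i ≠ t k) :
    (∑ k ∈ Finset.univ.filter (fun k : Fin n => m ≤ (k : ℕ)),
        ((E.mulVec (v i) ⬝ᵥ v k) / (t i - t k)) • v k)
      - ((1 / (t i - μ)) • r - (μ / (t i - μ) ^ 2) • r
          + (1 / (t i - μ) ^ 2) • A'.mulVec r) =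
      ∑ k ∈ Finset.univ.filter (fun k : Fin n => m ≤ (k : ℕ)),
        ((t k - μ) ^ 2 / ((t i - t k) * (t i - μ) ^ 2) * (E.mulVec (v i) ⬝ᵥ v k)) • v k := by
  set w : Fin n → ℝ := E.mulVec (v i) with hw
  set S : Finset (Fin n) := Finset.univ.filter (fun k : Fin n => m ≤ (k : ℕ)) with hS
  -- completeness of the orthonormal basis
  have hP : ∀ p q : Fin n, (∑ k, v k p * v k q) = if p = q then 1 else 0 := by
    let P : Matrix (Fin n) (Fin n) ℝ := fun k p => v k p
    have h1 : P * Pᵀ = 1 := by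
      ext k l
      rw [Matrix.mul_apply]
      simp only [Matrix.transpose_apply]
      simpa [Matrix.mul_apply, Matrix.transpose_apply, P, Matrix.one_apply,
        dotProduct] using hortho k l
    have h2 : Pᵀ * P = 1 := mul_eq_one_comm.mp h1
    intro p q
    have := congrFun (congrFun h2 p) q
    rw [Matrix.mul_apply] at this
    simp only [Matrix.transpose_apply] at this
    simpa [Matrix.mul_apply, Matrix.transpose_apply, P, Matrix.one_apply] using this
  -- expansion of any vector in the basis
  have hexp : ∀ u : Fin n → ℝ, u = ∑ k, (u ⬝ᵥ v k) • v k := by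
    intro u
    funext p
    have : ∑ k, (u ⬝ᵥ v k) * v k p = ∑ k, ∑ q, u q * (v k q * v k p) := by
      refine Finset.sum_congr rfl fun k _ => ?_
      simp [dotProduct, Finset.sum_mul, mul_assoc]
    simp only [Finset.sum_apply, Pi.smul_apply, smul_eq_mul]
    rw [this, Finset.sum_comm]
    have : ∀ q : Fin n, ∑ k, u q * (v k q * v k p) = u q * (if q = p then 1 else 0) := by
      intro q
      rw [← Finset.mul_sum, hP q p]
    simp only [this]
    simp
  -- reindexing a sum over Fin m
  have hsum : ∀ f : Fin n → (Fin n → ℝ), (∑ j : Fin m, f (Fin.castLE hmn j))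
      = ∑ k ∈ Finset.univ.filter (fun k : Fin n => (k : ℕ) < m), f k := by
    intro f
    refine Finset.sum_bij' (fun j _ => Fin.castLE hmn j)
      (fun k hk => ⟨(k : ℕ), by simpa using (Finset.mem_filter.mp hk).2⟩)
      ?_ ?_ ?_ ?_ ?_
    · intro j _; simp [Fin.castLE]
    · intro k hk; simp
    · intro j _; ext; simp
    · intro k hk; ext; simp
    · intro j _; rfl
  -- r as a sum over the tail eigenvectors
  have hr' : r = ∑ k ∈ S, (w ⬝ᵥ v k) • v k := by
    have hVV : (V * Vᵀ).mulVec w = ∑ j : Fin m, (w ⬝ᵥ v (Fin.castLE hmn j)) • v (Fin.castLE hmn j) := by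
      funext p
      simp only [Matrix.mulVec, Matrix.mul_apply, dotProduct, Matrix.transpose_apply,
        Finset.sum_apply, Pi.smul_apply, smul_eq_mul, hV]
      simp only [Finset.sum_mul]
      rw [Finset.sum_comm]
      refine Finset.sum_congr rfl fun j _ => ?_
      exact Finset.sum_congr rfl fun q _ => by ring
    have hsplit : (Finset.univ : Finset (Fin n)) =
        (Finset.univ.filter (fun k : Fin n => (k : ℕ) < m)) ∪ S := by
      ext k; simp [hS]; omega
    have hdisj : Disjoint (Finset.univ.filter (fun k : Fin n => (k : ℕ) < m)) S := by
      rw [Finset.disjoint_filter]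
      intro k _ h; simp [hS]; omega
    have hw' : (∑ k : Fin n, (w ⬝ᵥ v k) • v k)
        = (∑ k ∈ Finset.univ.filter (fun k : Fin n => (k : ℕ) < m), (w ⬝ᵥ v k) • v k)
          + ∑ k ∈ S, (w ⬝ᵥ v k) • v k := by
      rw [← Finset.sum_union hdisj, ← hsplit]
    rw [hr, Matrix.sub_mulVec, Matrix.one_mulVec, hVV, hsum (fun k => (w ⬝ᵥ v k) • v k)]
    nth_rewrite 1 [hexp w]
    rw [hw']
    abel
  -- A' r
  have hAr : A'.mulVec r = ∑ k ∈ S, ((w ⬝ᵥ v k) * t k) • v k := by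
    rw [hr', show A'.mulVec (∑ k ∈ S, (w ⬝ᵥ v k) • v k)
        = A'.mulVecLin (∑ k ∈ S, (w ⬝ᵥ v k) • v k) from rfl, map_sum]
    refine Finset.sum_congr rfl fun k _ => ?_
    rw [_root_.map_smul]
    show (w ⬝ᵥ v k) • A'.mulVec (v k) = _
    rw [heig k, smul_smul]
  rw [hAr, hr', Finset.smul_sum, Finset.smul_sum, Finset.smul_sum,
    ← Finset.sum_sub_distrib, ← Finset.sum_add_distrib, ← Finset.sum_sub_distrib]
  refine Finset.sum_congr rfl fun k hk => ?_
  have hk' : m ≤ (k : ℕ) := by simpa [hS] using hk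
  have h1 : t i - μ ≠ 0 := sub_ne_zero.mpr hμ
  have h2 : t i - t k ≠ 0 := sub_ne_zero.mpr (htk k hk')
  rw [smul_smul, smul_smul, smul_smul, ← sub_smul, ← add_smul, ← sub_smul]
  congr 1
  field_simp
  ring
end
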